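/- arXiv:1109.5740 — 8 statements merged into one kernel-verified Lean document; each statement's English description precedes it below -/
import Mathlib

section
/- Let g_0, …, g_{m-1} : ℍ → ℂ be holomorphic functions satisfying g_j(τ+1) = λ(g_j(τ) + g_{j-1}(τ)) for 0 ≤ j ≤ m-1 (with g_{-1} = 0), where λ = e^{2πiμ} is nonzero. Define h_j(τ) = ∑_{t=0}^{j} (-1)^t C(τ+t-1, t) g_{j-t}(τ). Then h_j(τ+1) = λ h_j(τ) for each 0 ≤ j ≤ m-1. -/
open Complex

/-- Generalized binomial coefficient `C(x,t) = x(x-1)⋯(x-t+1)/t!`. -/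
noncomputable def cbinom (x : ℂ) (t : ℕ) : ℂ :=
  (∏ i ∈ Finset.range t, (x - i)) / (Nat.factorial t)

lemma cbinom_zero (x : ℂ) : cbinom x 0 = 1 := by simp [cbinom]

lemma cbinom_pascal (x : ℂ) (t : ℕ) :
    cbinom (x + 1) (t + 1) = cbinom x (t + 1) + cbinom x t := by
  unfold cbinom
  have h1 : (∏ i ∈ Finset.range (t + 1), (x + 1 - (i : ℂ)))
      = (∏ i ∈ Finset.range t, (x - i)) * (x + 1) := by
    rw [Finset.prod_range_succ']
    congr 1
    · exact Finset.prod_congr rfl (fun i _ => by push_cast; ring)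
    · simp
  have h2 : (∏ i ∈ Finset.range (t + 1), (x - (i : ℂ)))
      = (∏ i ∈ Finset.range t, (x - i)) * (x - t) := Finset.prod_range_succ _ _
  have hfac : ((t + 1).factorial : ℂ) = ((t : ℂ) + 1) * t.factorial := by
    rw [Nat.factorial_succ]; push_cast; ring
  have hne : (t.factorial : ℂ) ≠ 0 := Nat.cast_ne_zero.mpr (Nat.factorial_ne_zero t)
  have hne1 : ((t : ℂ) + 1) ≠ 0 := Nat.cast_add_one_ne_zero t
  rw [h1, h2, hfac]
  field_simp
  ring

/-- If `g_0,…,g_{m-1}` are holomorphic on the upper half-plane and satisfy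
`g_j(τ+1) = λ(g_j(τ) + g_{j-1}(τ))` (with `g_{-1} = 0`), where `λ = e^{2πiμ}`,
then `h_j(τ) = ∑_{t=0}^{j} (-1)^t C(τ+t-1,t) g_{j-t}(τ)` satisfies
`h_j(τ+1) = λ h_j(τ)`. -/
theorem hfun_translation (m : ℕ) (μ : ℂ) (g : ℕ → ℂ → ℂ)
    (hol : ∀ j < m, DifferentiableOn ℂ (g j) {τ : ℂ | 0 < τ.im})
    (hrec : ∀ j < m, ∀ τ : ℂ, 0 < τ.im →
      g j (τ + 1) = Complex.exp (2 * Real.pi * I * μ) *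
        (g j τ + if j = 0 then 0 else g (j - 1) τ)) :
    ∀ j < m, ∀ τ : ℂ, 0 < τ.im →
      (∑ t ∈ Finset.range (j + 1), (-1 : ℂ) ^ t * cbinom ((τ + 1) + t - 1) t * g (j - t) (τ + 1))
        = Complex.exp (2 * Real.pi * I * μ) *
          ∑ t ∈ Finset.range (j + 1), (-1 : ℂ) ^ t * cbinom (τ + t - 1) t * g (j - t) τ := by
  intro j hj τ hτ
  set lam := Complex.exp (2 * Real.pi * I * μ) with hlam
  have hstep : ∀ t ∈ Finset.range (j + 1),
      (-1 : ℂ) ^ t * cbinom ((τ + 1) + t - 1) t * g (j - t) (τ + 1)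
      = lam * ((-1 : ℂ) ^ t * cbinom (τ + t) t * g (j - t) τ)
        + lam * ((-1 : ℂ) ^ t * cbinom (τ + t) t *
            (if j - t = 0 then 0 else g (j - t - 1) τ)) := by
    intro t ht
    have hjt : j - t < m := lt_of_le_of_lt (Nat.sub_le j t) hj
    have harg : (τ + 1) + (t : ℂ) - 1 = τ + t := by ring
    rw [harg, hrec (j - t) hjt τ hτ]
    ring
  rw [Finset.sum_congr rfl hstep, Finset.sum_add_distrib, ← Finset.mul_sum, ← Finset.mul_sum,
    ← mul_add]
  congr 1
  -- drop the vanishing `t = j` term in the second sum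
  have hsecond : (∑ t ∈ Finset.range (j + 1), (-1 : ℂ) ^ t * cbinom (τ + t) t *
      (if j - t = 0 then 0 else g (j - t - 1) τ))
      = ∑ t ∈ Finset.range j, (-1 : ℂ) ^ t * cbinom (τ + t) t * g (j - t - 1) τ := by
    rw [Finset.sum_range_succ]
    have hz : (if j - j = 0 then (0 : ℂ) else g (j - j - 1) τ) = 0 := by simp
    rw [hz, mul_zero, add_zero]
    apply Finset.sum_congr rfl
    intro t ht
    have : j - t ≠ 0 := Nat.sub_ne_zero_of_lt (Finset.mem_range.mp ht)
    rw [if_neg this]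
  rw [hsecond]
  rw [show (∑ t ∈ Finset.range (j + 1), (-1 : ℂ) ^ t * cbinom (τ + t) t * g (j - t) τ)
      = (∑ t ∈ Finset.range j, (-1 : ℂ) ^ (t + 1) * cbinom (τ + (t + 1 : ℕ)) (t + 1) * g (j - (t + 1)) τ)
        + (-1 : ℂ) ^ 0 * cbinom (τ + (0 : ℕ)) 0 * g (j - 0) τ from Finset.sum_range_succ' _ _]
  rw [show (∑ t ∈ Finset.range (j + 1), (-1 : ℂ) ^ t * cbinom (τ + t - 1) t * g (j - t) τ)
      = (∑ t ∈ Finset.range j, (-1 : ℂ) ^ (t + 1) * cbinom (τ + (t + 1 : ℕ) - 1) (t + 1) * g (j - (t + 1)) τ)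
        + (-1 : ℂ) ^ 0 * cbinom (τ + (0 : ℕ) - 1) 0 * g (j - 0) τ from Finset.sum_range_succ' _ _]
  have h0 : (-1 : ℂ) ^ 0 * cbinom (τ + (0 : ℕ)) 0 * g (j - 0) τ
      = (-1 : ℂ) ^ 0 * cbinom (τ + (0 : ℕ) - 1) 0 * g (j - 0) τ := by
    rw [cbinom_zero, cbinom_zero]
  rw [add_right_comm, h0]
  congr 1
  rw [← Finset.sum_add_distrib]
  refine Finset.sum_congr rfl (fun i _ => ?_)
  have harg1 : τ + ((i : ℂ) + 1) = (τ + i) + 1 := by ring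
  have hc : ((i + 1 : ℕ) : ℂ) = (i : ℂ) + 1 := by push_cast; ring
  have hidx : j - (i + 1) = j - i - 1 := by omega
  rw [hc, harg1]
  have harg2 : τ + (i : ℂ) + 1 - 1 = τ + i := by ring
  rw [harg2, hidx, cbinom_pascal (τ + i) i]
  ring
end

section
/- Let g_0, …, g_{m-1} be holomorphic functions on the upper half-plane such that the matrix of the translation action τ ↦ τ+1 on their span (in the ordered basis g_0, …, g_{m-1}) is the modified Jordan block J_{m,λ} with λ = e^{2πiμ}. Then there exist holomorphic functions h_0, …, h_{m-1} on the upper half-plane with h_t(τ+1) = λ h_t(τ) (hence each h_t has a convergent Fourier expansion ∑_{n∈ℤ} a_t(n) q^{n+μ}, q = e^{2πiτ}), such that g_j(τ) = ∑_{t=0}^{j} C(τ, t) h_{j-t}(τ) for 0 ≤ j ≤ m-1. -/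
open Complex

lemma cbinom_diff (t : ℕ) : Differentiable ℂ (fun x => cbinom x t) := by
  unfold cbinom
  apply Differentiable.div_const
  exact Differentiable.fun_finsetProd (fun i _ => (differentiable_id).sub_const _)

noncomputable def hfun (g : ℕ → ℂ → ℂ) : ℕ → ℂ → ℂ
  | j => fun τ => g j τ -
      ∑ t ∈ (Finset.range j).attach, cbinom τ (t.1 + 1) * hfun g (j - (t.1 + 1)) τ
  termination_by j => j
  decreasing_by
    have := t.2; simp only [Finset.mem_range] at this; omega

lemma hfun_def (g : ℕ → ℂ → ℂ) (j : ℕ) (τ : ℂ) :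
    hfun g j τ = g j τ - ∑ t ∈ Finset.range j, cbinom τ (t + 1) * hfun g (j - (t + 1)) τ := by
  rw [hfun]
  show g j τ - _ = _
  congr 1
  exact Finset.sum_attach (Finset.range j) (fun t => cbinom τ (t + 1) * hfun g (j - (t + 1)) τ)

lemma g_eq (g : ℕ → ℂ → ℂ) (j : ℕ) (τ : ℂ) :
    g j τ = ∑ t ∈ Finset.range (j + 1), cbinom τ t * hfun g (j - t) τ := by
  rw [Finset.sum_range_succ']
  simp only [Nat.sub_zero, cbinom_zero, one_mul]
  rw [hfun_def]
  ring

lemma hfun_diffOn (g : ℕ → ℂ → ℂ) (m : ℕ)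
    (hol : ∀ j < m, DifferentiableOn ℂ (g j) {τ : ℂ | 0 < τ.im}) :
    ∀ j < m, DifferentiableOn ℂ (hfun g j) {τ : ℂ | 0 < τ.im} := by
  intro j
  induction j using Nat.strong_induction_on with
  | _ j IH =>
    intro hj
    have : hfun g j = fun τ => g j τ -
        ∑ t ∈ Finset.range j, cbinom τ (t + 1) * hfun g (j - (t + 1)) τ := by
      funext τ; exact hfun_def g j τ
    rw [this]
    apply DifferentiableOn.sub (hol j hj)
    apply DifferentiableOn.fun_sum
    intro t ht
    simp only [Finset.mem_range] at ht
    exact DifferentiableOn.mul ((cbinom_diff (t + 1)).differentiableOn)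
      (IH (j - (t + 1)) (by omega) (by omega))

lemma hfun_trans (g : ℕ → ℂ → ℂ) (m : ℕ) (μ : ℂ)
    (hrec : ∀ j < m, ∀ τ : ℂ, 0 < τ.im →
      g j (τ + 1) = Complex.exp (2 * Real.pi * I * μ) *
        (g j τ + if j = 0 then 0 else g (j - 1) τ)) :
    ∀ j < m, ∀ τ : ℂ, 0 < τ.im →
      hfun g j (τ + 1) = Complex.exp (2 * Real.pi * I * μ) * hfun g j τ := by
  set lam := Complex.exp (2 * Real.pi * I * μ) with hlam
  intro j
  induction j using Nat.strong_induction_on with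
  | _ j IH =>
    intro hj τ hτ
    rw [hfun_def, hfun_def, hrec j hj τ hτ]
    have hsum : ∑ t ∈ Finset.range j, cbinom (τ + 1) (t + 1) * hfun g (j - (t + 1)) (τ + 1)
        = (lam * ∑ t ∈ Finset.range j, cbinom τ (t + 1) * hfun g (j - (t + 1)) τ)
          + (lam * ∑ t ∈ Finset.range j, cbinom τ t * hfun g (j - (t + 1)) τ) := by
      rw [Finset.mul_sum, Finset.mul_sum, ← Finset.sum_add_distrib]
      apply Finset.sum_congr rfl
      intro t ht
      simp only [Finset.mem_range] at ht
      rw [cbinom_pascal, IH (j - (t + 1)) (by omega) (by omega) τ hτ]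
      ring
    rw [hsum]
    rcases Nat.eq_zero_or_pos j with h0 | h0
    · subst h0; simp
    · rw [if_neg (by omega)]
      have hg : g (j - 1) τ = ∑ t ∈ Finset.range j, cbinom τ t * hfun g (j - (t + 1)) τ := by
        have h1 := g_eq g (j - 1) τ
        rw [Nat.sub_add_cancel h0] at h1
        rw [h1]
        apply Finset.sum_congr rfl
        intro t _
        congr 2
        omega
      rw [hg]
      ring

/-- If `g_0,…,g_{m-1}` are holomorphic on the upper half-plane and translation
`τ ↦ τ+1` acts on their span by the modified Jordan block `J_{m,λ}`, i.e.
`g_j(τ+1) = λ(g_j(τ) + g_{j-1}(τ))` with `g_{-1} = 0` and `λ = e^{2πiμ}`, then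
there are holomorphic `h_0,…,h_{m-1}` with `h_t(τ+1) = λ h_t(τ)` such that
`g_j(τ) = ∑_{t=0}^{j} C(τ,t) h_{j-t}(τ)`. -/
theorem polynomial_q_expansion (m : ℕ) (μ : ℂ) (g : ℕ → ℂ → ℂ)
    (hol : ∀ j < m, DifferentiableOn ℂ (g j) {τ : ℂ | 0 < τ.im})
    (hrec : ∀ j < m, ∀ τ : ℂ, 0 < τ.im →
      g j (τ + 1) = Complex.exp (2 * Real.pi * I * μ) *
        (g j τ + if j = 0 then 0 else g (j - 1) τ)) :
    ∃ h : ℕ → ℂ → ℂ,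
      (∀ t < m, DifferentiableOn ℂ (h t) {τ : ℂ | 0 < τ.im}) ∧
      (∀ t < m, ∀ τ : ℂ, 0 < τ.im →
        h t (τ + 1) = Complex.exp (2 * Real.pi * I * μ) * h t τ) ∧
      (∀ j < m, ∀ τ : ℂ, 0 < τ.im →
        g j τ = ∑ t ∈ Finset.range (j + 1), cbinom τ t * h (j - t) τ) := by
  exact ⟨hfun g, hfun_diffOn g m hol, hfun_trans g m μ hrec,
    fun j _ τ _ => g_eq g j τ⟩
end

section
/- Let γ = [[a,b],[c,d]] ∈ SL(2,ℤ) with c > 0 have Eichler canonical representation γ = (S T^{l_{ν+1}})⋯(S T^{l_0}) with l_{ν+1} ≠ 0 and l_0 < 0. Then |l_0 l_1 ⋯ l_{ν+1}| ≤ |d|. -/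
open ModularGroup

/-- The product `(S T^{l_{ν+1}}) ⋯ (S T^{l_1}) (S T^{l_0})` where
`L = [l_0, l_1, …, l_{ν+1}]`. -/
def eichlerWord (L : List ℤ) : Matrix.SpecialLinearGroup (Fin 2) ℤ :=
  ((L.map fun l => ModularGroup.S * ModularGroup.T ^ l).reverse).prod

set_option linter.unusedVariables false

lemma eichlerWord_cons (l : ℤ) (M : List ℤ) :
    eichlerWord (l :: M) = eichlerWord M * (ModularGroup.S * ModularGroup.T ^ l) := by
  simp [eichlerWord]

lemma ST_entry01 (l : ℤ) (P : Matrix.SpecialLinearGroup (Fin 2) ℤ) :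
    ((ModularGroup.S * ModularGroup.T ^ l) * P).1 0 1 = -(P.1 1 1) := by
  simp [Matrix.SpecialLinearGroup.coe_mul, ModularGroup.coe_S, coe_T_zpow,
    Matrix.mul_apply, Fin.sum_univ_two]

lemma ST_entry11 (l : ℤ) (P : Matrix.SpecialLinearGroup (Fin 2) ℤ) :
    ((ModularGroup.S * ModularGroup.T ^ l) * P).1 1 1 = P.1 0 1 + l * P.1 1 1 := by
  simp [Matrix.SpecialLinearGroup.coe_mul, ModularGroup.coe_S, coe_T_zpow,
    Matrix.mul_apply, Fin.sum_univ_two]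

lemma abs_add_ge (x y : ℤ) (h : 0 < x * y) : |y| ≤ |x + y| := by
  rcases abs_cases (x + y) with ⟨h1, h2⟩ <;> rcases abs_cases y with ⟨h3, h4⟩ <;>
    rcases abs_cases x with ⟨h5, h6⟩ <;> nlinarith

lemma eichler_aux (M : List ℤ) : ∀ (s : ℤ) (P : Matrix.SpecialLinearGroup (Fin 2) ℤ),
    (s = 1 ∨ s = -1) →
    (∀ i < M.length, 0 < s * (-1 : ℤ) ^ i * M.getD i 0) →
    0 < s * P.1 0 1 * P.1 1 1 →
    |M.prod| * |P.1 1 1| ≤ |(eichlerWord M * P).1 1 1| := by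
  induction M with
  | nil =>
    intro s P _ _ _
    simp [eichlerWord]
  | cons l M' ih =>
    intro s P hs hsign hP
    have hs2 : s * s = 1 := by rcases hs with rfl | rfl <;> ring
    have hl : 0 < s * l := by simpa using hsign 0 (by simp)
    set b := P.1 0 1 with hb
    set d := P.1 1 1 with hd
    set Q := (ModularGroup.S * ModularGroup.T ^ l) * P with hQ
    have hQ01 : Q.1 0 1 = -d := ST_entry01 l P
    have hQ11 : Q.1 1 1 = b + l * d := ST_entry11 l P
    -- invariant for Q with sign -s
    have hinv : 0 < (-s) * Q.1 0 1 * Q.1 1 1 := by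
      have hd0 : d ≠ 0 := by
        intro h
        rw [h] at hP; simp at hP
      have h2 := mul_pos hl (mul_self_pos.mpr hd0)
      rw [hQ01, hQ11]; nlinarith [hP, h2]
    have hsign' : ∀ i < M'.length, 0 < (-s) * (-1 : ℤ) ^ i * M'.getD i 0 := by
      intro i hi
      have := hsign (i + 1) (by simpa using Nat.succ_lt_succ hi)
      simpa [pow_succ, mul_comm, mul_assoc, mul_left_comm] using this
    have hkey : |l| * |d| ≤ |Q.1 1 1| := by
      rw [hQ11, ← abs_mul]
      exact abs_add_ge b (l * d) (by nlinarith)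
    have hIH := ih (-s) Q (by rcases hs with rfl | rfl <;> simp) hsign' hinv
    have heq : eichlerWord (l :: M') * P = eichlerWord M' * Q := by
      rw [eichlerWord_cons, mul_assoc, hQ]
    rw [heq]
    have h1 : |(l :: M').prod| * |d| = |M'.prod| * (|l| * |d|) := by
      simp [abs_mul]; ring
    calc |(l :: M').prod| * |P.1 1 1| = |M'.prod| * (|l| * |d|) := h1
      _ ≤ |M'.prod| * |Q.1 1 1| := by
          exact mul_le_mul_of_nonneg_left hkey (abs_nonneg _)
      _ ≤ |(eichlerWord M' * Q).1 1 1| := hIH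

/-- If `γ = [[a,b],[c,d]] ∈ SL(2,ℤ)` with `c > 0` has Eichler canonical
representation with `l_{ν+1} ≠ 0` and `l_0 < 0`, then
`|l_0 l_1 ⋯ l_{ν+1}| ≤ |d|`. -/
theorem eichler_product_estimate_neg (γ : Matrix.SpecialLinearGroup (Fin 2) ℤ)
    (hc : 0 < γ.1 1 0) (L : List ℤ)
    (hlen : 2 ≤ L.length) (hγ : γ = eichlerWord L)
    (hsign : ∀ j : ℕ, 1 ≤ j → j ≤ L.length - 2 → 0 < (-1 : ℤ) ^ (j - 1) * L.getD j 0)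
    (hlast : 0 ≤ (-1 : ℤ) ^ (L.length - 2) * L.getD (L.length - 1) 0)
    (hlast' : L.getD (L.length - 1) 0 ≠ 0)
    (h0 : L.getD 0 0 < 0) :
    |L.prod| ≤ |γ.1 1 1| := by
  match L, hlen with
  | l0 :: l1 :: M, _ =>
  clear hlen
  have hL0 : l0 < 0 := by simpa using h0
  have hlen2 : (l0 :: l1 :: M).length - 2 = M.length := by simp
  have hlen1 : (l0 :: l1 :: M).length - 1 = M.length + 1 := by simp
  -- l1 > 0
  have hl1 : 0 < l1 := by
    rcases Nat.eq_zero_or_pos M.length with hM | hM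
    · have hMnil : M = [] := List.eq_nil_of_length_eq_zero hM
      subst hMnil
      simp at hlast hlast'
      omega
    · have := hsign 1 le_rfl (by omega)
      simpa using this
  -- sign condition for M
  have hsignM : ∀ i < M.length, 0 < (-1 : ℤ) * (-1 : ℤ) ^ i * M.getD i 0 := by
    intro i hi
    rcases Nat.lt_or_ge i (M.length - 1) with h | h
    · have := hsign (i + 2) (by omega) (by omega)
      have hg : (l0 :: l1 :: M).getD (i + 2) 0 = M.getD i 0 := by simp
      rw [hg] at this
      calc (0:ℤ) < (-1) ^ (i + 2 - 1) * M.getD i 0 := this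
        _ = (-1) * (-1) ^ i * M.getD i 0 := by rw [show i + 2 - 1 = i + 1 by omega, pow_succ]; ring
    · have hieq : i = M.length - 1 := by omega
      have hg : (l0 :: l1 :: M).getD ((l0 :: l1 :: M).length - 1) 0 = M.getD i 0 := by
        rw [hlen1, hieq, show M.length + 1 = (M.length - 1) + 1 + 1 from by omega,
          List.getD_cons_succ, List.getD_cons_succ]
      rw [hlen2, hg] at hlast
      rw [hg] at hlast'
      have hexp : M.length = i + 1 := by omega
      rw [hexp] at hlast
      have : (-1 : ℤ) ^ (i + 1) * M.getD i 0 ≠ 0 := by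
        intro h'
        rcases mul_eq_zero.mp h' with h'' | h''
        · exact absurd h'' (by positivity)
        · exact hlast' h''
      calc (0:ℤ) < (-1) ^ (i+1) * M.getD i 0 := lt_of_le_of_ne hlast (Ne.symm this)
        _ = (-1) * (-1) ^ i * M.getD i 0 := by rw [pow_succ]; ring
  -- the base matrix P = eichlerWord [l0, l1]
  set P := eichlerWord [l0, l1] with hPdef
  have hP01 : P.1 0 1 = -l0 := by
    have : P = (ModularGroup.S * ModularGroup.T ^ l1) * (ModularGroup.S * ModularGroup.T ^ l0) := by
      simp [hPdef, eichlerWord]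
    rw [this, ST_entry01]
    simp [Matrix.SpecialLinearGroup.coe_mul, ModularGroup.coe_S, coe_T_zpow,
      Matrix.mul_apply, Fin.sum_univ_two]
  have hP11 : P.1 1 1 = l1 * l0 - 1 := by
    have : P = (ModularGroup.S * ModularGroup.T ^ l1) * (ModularGroup.S * ModularGroup.T ^ l0) := by
      simp [hPdef, eichlerWord]
    rw [this, ST_entry11]
    simp [Matrix.SpecialLinearGroup.coe_mul, ModularGroup.coe_S, coe_T_zpow,
      Matrix.mul_apply, Fin.sum_univ_two]
    ring
  have hinv : 0 < (-1 : ℤ) * P.1 0 1 * P.1 1 1 := by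
    rw [hP01, hP11]
    have hml : (0:ℤ) < 1 - l1 * l0 := by nlinarith [mul_pos hl1 (neg_pos.mpr hL0)]
    nlinarith [mul_pos (neg_pos.mpr hL0) hml]
  have hdecomp : eichlerWord (l0 :: l1 :: M) = eichlerWord M * P := by
    rw [hPdef]
    simp [eichlerWord, mul_assoc]
  have haux := eichler_aux M (-1) P (Or.inr rfl) hsignM hinv
  rw [hγ, hdecomp]
  have hPd : |l1| * |l0| ≤ |P.1 1 1| := by
    rw [hP11]
    rw [abs_of_pos hl1, abs_of_neg hL0]
    rw [abs_of_neg (by nlinarith : l1 * l0 - 1 < 0)]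
    nlinarith
  have hprod : |(l0 :: l1 :: M).prod| = |M.prod| * (|l1| * |l0|) := by
    simp [abs_mul]; ring
  calc |(l0 :: l1 :: M).prod| = |M.prod| * (|l1| * |l0|) := hprod
    _ ≤ |M.prod| * |P.1 1 1| := mul_le_mul_of_nonneg_left hPd (abs_nonneg _)
    _ ≤ |(eichlerWord M * P).1 1 1| := haux
end

section
/- Let γ = [[a,b],[c,d]] ∈ SL(2,ℤ) with c > 0 have Eichler canonical representation γ = (S T^{l_{ν+1}})⋯(S T^{l_0}) with l_{ν+1} ≠ 0 and l_0 > 0. Then |l_0 l_1 ⋯ l_{ν+1}| ≤ |c| + |d|. -/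
open ModularGroup

private def eps (k : ℕ) : ℤ := (-1) ^ (k / 2)

private lemma eps_mul_self (k : ℕ) : eps k * eps k = 1 := by
  simp [eps, ← pow_add, pow_mul']

private lemma eps_succ (k : ℕ) : eps (k + 1) = (-1) ^ k * eps k := by
  have h : (k+1)/2 + k/2 = k := by omega
  have : eps (k+1) * eps k = (-1:ℤ)^k := by rw [eps, eps, ← pow_add, h]
  calc eps (k+1) = eps (k+1) * (eps k * eps k) := by rw [eps_mul_self]; ring
    _ = (-1)^k * eps k := by rw [← mul_assoc, this]

private lemma eps_add_two (k : ℕ) : eps (k + 2) = -eps k := by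
  have : (k+2)/2 = k/2 + 1 := by omega
  simp [eps, this, pow_succ]

private lemma entry10 (l : ℤ) (A : Matrix.SpecialLinearGroup (Fin 2) ℤ) :
    ((S * T ^ l) * A).1 1 0 = A.1 0 0 + l * A.1 1 0 := by
  simp [Matrix.SpecialLinearGroup.coe_mul, coe_S, coe_T_zpow, Matrix.mul_apply, Fin.sum_univ_two]

private lemma entry11 (l : ℤ) (A : Matrix.SpecialLinearGroup (Fin 2) ℤ) :
    ((S * T ^ l) * A).1 1 1 = A.1 0 1 + l * A.1 1 1 := by
  simp [Matrix.SpecialLinearGroup.coe_mul, coe_S, coe_T_zpow, Matrix.mul_apply, Fin.sum_univ_two]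

private lemma entry00 (l : ℤ) (A : Matrix.SpecialLinearGroup (Fin 2) ℤ) :
    ((S * T ^ l) * A).1 0 0 = -A.1 1 0 := by
  simp [Matrix.SpecialLinearGroup.coe_mul, coe_S, coe_T_zpow, Matrix.mul_apply, Fin.sum_univ_two]

private lemma entry01 (l : ℤ) (A : Matrix.SpecialLinearGroup (Fin 2) ℤ) :
    ((S * T ^ l) * A).1 0 1 = -A.1 1 1 := by
  simp [Matrix.SpecialLinearGroup.coe_mul, coe_S, coe_T_zpow, Matrix.mul_apply, Fin.sum_univ_two]

private lemma eichlerWord_append (K : List ℤ) (l : ℤ) :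
    eichlerWord (K ++ [l]) = (S * T ^ l) * eichlerWord K := by
  simp [eichlerWord]

private lemma key : ∀ (K : List ℤ), 2 ≤ K.length → 0 < K.getD 0 0 →
    (∀ j, 1 ≤ j → j < K.length → 0 < (-1:ℤ)^(j-1) * K.getD j 0) →
    (0 < eps (K.length-1) * (eichlerWord K).1 1 0 ∧
     0 ≤ eps (K.length-1) * (eichlerWord K).1 1 1 ∧
     0 ≤ eps K.length * (eichlerWord K).1 0 0 ∧
     0 ≤ eps K.length * (eichlerWord K).1 0 1 ∧
     |K.prod| ≤ eps (K.length-1) * ((eichlerWord K).1 1 0 + (eichlerWord K).1 1 1)) := by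
  intro K
  induction K using List.reverseRecOn with
  | nil => intro h; simp at h
  | append_singleton K' l ih =>
    rcases K' with _ | ⟨a, K''⟩
    · intro h; simp at h
    rcases K'' with _ | ⟨b, K'''⟩
    · -- base case: K = [a, l]
      intro _ h0 hs
      have ha : 0 < a := by simpa using h0
      have hl : 0 < l := by simpa using hs 1 le_rfl (by simp)
      have hW := eichlerWord_append [a] l
      have hc := entry10 l (eichlerWord [a])
      have hd := entry11 l (eichlerWord [a])
      have he0 := entry00 l (eichlerWord [a])
      have he1 := entry01 l (eichlerWord [a])
      have hbase : eichlerWord [a] = S * T ^ a := by simp [eichlerWord]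
      have b10 : (eichlerWord [a]).1 1 0 = 1 := by
        rw [hbase]; simp [Matrix.SpecialLinearGroup.coe_mul, coe_S, coe_T_zpow,
          Matrix.mul_apply, Fin.sum_univ_two]
      have b11 : (eichlerWord [a]).1 1 1 = a := by
        rw [hbase]; simp [Matrix.SpecialLinearGroup.coe_mul, coe_S, coe_T_zpow,
          Matrix.mul_apply, Fin.sum_univ_two]
      have b00 : (eichlerWord [a]).1 0 0 = 0 := by
        rw [hbase]; simp [Matrix.SpecialLinearGroup.coe_mul, coe_S, coe_T_zpow,
          Matrix.mul_apply, Fin.sum_univ_two]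
      have b01 : (eichlerWord [a]).1 0 1 = -1 := by
        rw [hbase]; simp [Matrix.SpecialLinearGroup.coe_mul, coe_S, coe_T_zpow,
          Matrix.mul_apply, Fin.sum_univ_two]
      have hWc : (eichlerWord ([a] ++ [l])).1 1 0 = l := by
        rw [hW, hc, b00, b10]; ring
      have hWd : (eichlerWord ([a] ++ [l])).1 1 1 = l * a - 1 := by
        rw [hW, hd, b01, b11]; ring
      have hWa : (eichlerWord ([a] ++ [l])).1 0 0 = -1 := by
        rw [hW, he0, b10]
      have hWb : (eichlerWord ([a] ++ [l])).1 0 1 = -a := by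
        rw [hW, he1, b11]
      have hlen2 : ([a] ++ [l] : List ℤ).length = 2 := rfl
      rw [hlen2, hWc, hWd, hWa, hWb]
      have e1 : eps (2-1) = 1 := rfl
      have e2 : eps 2 = -1 := rfl
      rw [e1, e2]
      have hprod : (([a] ++ [l]) : List ℤ).prod = a * l := by simp
      rw [hprod, abs_of_pos (mul_pos ha hl)]
      refine ⟨by linarith, ?_, by norm_num, by linarith, ?_⟩
      · nlinarith
      · nlinarith
    · -- step case: K' = a :: b :: K''' has length ≥ 2
      intro hlen h0 hs
      set Q : List ℤ := a :: b :: K''' with hQ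
      have hQlen : 2 ≤ Q.length := by simp [hQ]
      have h0' : 0 < Q.getD 0 0 := by
        have := h0; rwa [List.getD_append _ _ _ _ (by simp [hQ])] at this
      have hs' : ∀ j, 1 ≤ j → j < Q.length → 0 < (-1:ℤ)^(j-1) * Q.getD j 0 := by
        intro j hj1 hj2
        have := hs j hj1 (by simp; omega)
        rwa [List.getD_append _ _ _ _ hj2] at this
      obtain ⟨ic, idd, ia, ib, iprod⟩ := ih hQlen h0' hs'
      set n : ℕ := Q.length - 1 with hn
      have hnQ : Q.length = n + 1 := by simp [hn, hQ]
      have hlenK : (Q ++ [l]).length = n + 2 := by simp [hnQ]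
      -- sign of l
      have hl : 0 < (-1:ℤ)^n * l := by
        have := hs (n+1) (by omega) (by rw [hlenK]; omega)
        rwa [show (Q ++ [l]).getD (n+1) 0 = l by
          rw [show n + 1 = Q.length + 0 by omega]
          simp [List.getD_append_right], Nat.add_sub_cancel] at this
      set A := eichlerWord Q with hA
      set c := A.1 1 0; set d := A.1 1 1; set a0 := A.1 0 0; set b0 := A.1 0 1
      have hW := eichlerWord_append Q l
      have hc' : (eichlerWord (Q ++ [l])).1 1 0 = a0 + l * c := by rw [hW]; exact entry10 l A
      have hd' : (eichlerWord (Q ++ [l])).1 1 1 = b0 + l * d := by rw [hW]; exact entry11 l A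
      have ha' : (eichlerWord (Q ++ [l])).1 0 0 = -c := by rw [hW]; exact entry00 l A
      have hb' : (eichlerWord (Q ++ [l])).1 0 1 = -d := by rw [hW]; exact entry01 l A
      rw [hlenK, show n+2-1 = n+1 from rfl, hc', hd', ha', hb']
      rw [hnQ] at ia ib
      have esucc : eps (n+1) = (-1)^n * eps n := eps_succ n
      have eadd2 : eps (n+2) = -eps n := eps_add_two n
      have hlc : 0 < eps (n+1) * (l * c) := by
        rw [esucc]
        calc (0:ℤ) < ((-1)^n * l) * (eps n * c) := mul_pos hl ic
          _ = (-1)^n * eps n * (l * c) := by ring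
      have hld : 0 ≤ eps (n+1) * (l * d) := by
        rw [esucc]
        calc (0:ℤ) ≤ ((-1)^n * l) * (eps n * d) := mul_nonneg hl.le idd
          _ = (-1)^n * eps n * (l * d) := by ring
      have g3 : 0 ≤ eps (n+2) * (-c) := by
        rw [eadd2, neg_mul, mul_neg, neg_neg]; exact ic.le
      have g4 : 0 ≤ eps (n+2) * (-d) := by
        rw [eadd2, neg_mul, mul_neg, neg_neg]; exact idd
      refine ⟨by rw [mul_add]; linarith, by rw [mul_add]; linarith, g3, g4, ?_⟩
      -- product estimate
      have habsl : |l| = (-1)^n * l := by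
        rcases Nat.even_or_odd n with he | ho
        · rw [he.neg_one_pow]; rw [he.neg_one_pow, one_mul] at hl
          rw [one_mul, abs_of_pos hl]
        · rw [ho.neg_one_pow]; rw [ho.neg_one_pow] at hl
          have : l < 0 := by linarith
          rw [abs_of_neg this]; ring
      have hprod : (Q ++ [l]).prod = Q.prod * l := by simp
      rw [hprod, abs_mul]
      have h1 : |Q.prod| * |l| ≤ (eps n * (c + d)) * |l| :=
        mul_le_mul_of_nonneg_right iprod (abs_nonneg l)
      have h2 : (eps n * (c + d)) * |l| = eps (n+1) * (l * c) + eps (n+1) * (l * d) := by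
        rw [habsl, esucc]; ring
      rw [mul_add, mul_add, mul_add]
      linarith

/-- If `γ = [[a,b],[c,d]] ∈ SL(2,ℤ)` with `c > 0` has Eichler canonical
representation with `l_{ν+1} ≠ 0` and `l_0 > 0`, then
`|l_0 l_1 ⋯ l_{ν+1}| ≤ |c| + |d|`. -/
theorem eichler_product_estimate_pos (γ : Matrix.SpecialLinearGroup (Fin 2) ℤ)
    (hc : 0 < γ.1 1 0) (L : List ℤ)
    (hlen : 2 ≤ L.length) (hγ : γ = eichlerWord L)
    (hsign : ∀ j : ℕ, 1 ≤ j → j ≤ L.length - 2 → 0 < (-1 : ℤ) ^ (j - 1) * L.getD j 0)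
    (hlast : 0 ≤ (-1 : ℤ) ^ (L.length - 2) * L.getD (L.length - 1) 0)
    (hlast' : L.getD (L.length - 1) 0 ≠ 0)
    (h0 : 0 < L.getD 0 0) :
    |L.prod| ≤ |γ.1 1 0| + |γ.1 1 1| := by
  have hs : ∀ j, 1 ≤ j → j < L.length → 0 < (-1:ℤ)^(j-1) * L.getD j 0 := by
    intro j hj1 hj2
    rcases lt_or_ge j (L.length - 1) with h | h
    · exact hsign j hj1 (by omega)
    · have hj : j = L.length - 1 := by omega
      subst hj
      rw [show L.length - 1 - 1 = L.length - 2 by omega]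
      rcases hlast.lt_or_eq with h' | h'
      · exact h'
      · exfalso; apply hlast'
        have hne : ((-1:ℤ)^(L.length - 2)) ≠ 0 := by positivity
        have := h'.symm
        exact (mul_eq_zero.mp this).resolve_left hne
  obtain ⟨_, _, _, _, hfin⟩ := key L hlen h0 hs
  rw [hγ]
  calc |L.prod| ≤ eps (L.length - 1) * ((eichlerWord L).1 1 0 + (eichlerWord L).1 1 1) := hfin
    _ ≤ |(eichlerWord L).1 1 0| + |(eichlerWord L).1 1 1| := by
        have h1 : |eps (L.length - 1)| = 1 := by simp [eps]
        calc eps (L.length - 1) * ((eichlerWord L).1 1 0 + (eichlerWord L).1 1 1)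
            ≤ |eps (L.length - 1) * ((eichlerWord L).1 1 0 + (eichlerWord L).1 1 1)| := le_abs_self _
          _ = |(eichlerWord L).1 1 0 + (eichlerWord L).1 1 1| := by rw [abs_mul, h1, one_mul]
          _ ≤ _ := abs_add_le _ _
end

section
/- Let γ = [[a,b],[c,d]] ∈ SL(2,ℤ) with c > 0 have Eichler canonical representation with l_{ν+1} ≠ 0 and l_0 = 0. Then |l_1 l_2 ⋯ l_{ν+1}| ≤ |d - c|. -/
open ModularGroup

namespace EichlerAux

def g : List ℤ → ℤ × ℤ
  | [] => (1, -1)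
  | x :: xs => (x * (g xs).1 - (g xs).2, (g xs).1)

def wprod (K : List ℤ) : Matrix.SpecialLinearGroup (Fin 2) ℤ :=
  (K.map fun l => ModularGroup.S * ModularGroup.T ^ l).prod

lemma wprod_cons (x : ℤ) (K : List ℤ) :
    wprod (x :: K) = (ModularGroup.S * ModularGroup.T ^ x) * wprod K := by
  simp [wprod]

lemma wprod_append (A B : List ℤ) : wprod (A ++ B) = wprod A * wprod B := by
  simp [wprod]

lemma eichlerWord_eq (L : List ℤ) : eichlerWord L = wprod L.reverse := by
  simp [eichlerWord, wprod, List.map_reverse]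

lemma coe_ST (x : ℤ) :
    ((ModularGroup.S * ModularGroup.T ^ x : Matrix.SpecialLinearGroup (Fin 2) ℤ) :
      Matrix (Fin 2) (Fin 2) ℤ) = !![0, -1; 1, x] := by
  rw [Matrix.SpecialLinearGroup.coe_mul, ModularGroup.coe_S, ModularGroup.coe_T_zpow]
  ext i j
  fin_cases i <;> fin_cases j <;>
    simp [Matrix.mul_apply, Fin.sum_univ_two]

lemma wprod_row (K : List ℤ) :
    (wprod K).1 1 0 + (wprod K).1 1 1 = (g K).1 ∧
    (wprod K).1 0 0 + (wprod K).1 0 1 = -((g K).2) := by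
  induction K with
  | nil => simp [wprod, g]
  | cons x K ih =>
    have hco : (wprod (x :: K)).1 = !![0, -1; 1, x] * (wprod K).1 := by
      rw [wprod_cons, Matrix.SpecialLinearGroup.coe_mul, coe_ST]
    constructor
    · rw [hco]
      simp only [Matrix.mul_apply, Fin.sum_univ_two, g]
      simp
      linear_combination ih.2 + x * ih.1
    · rw [hco]
      simp only [Matrix.mul_apply, Fin.sum_univ_two, g]
      simp
      linear_combination -ih.1

lemma key (K : List ℤ) (h : ∀ i < K.length, 0 < (-1 : ℤ) ^ (K.length - 1 - i) * K.getD i 0) :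
    |K.prod| ≤ |(g K).1| ∧ (-1 : ℤ) ^ K.length * ((g K).1 * (g K).2) < 0 := by
  induction K with
  | nil => norm_num [g]
  | cons x K ih =>
    set t := (g K).1 with ht
    set t' := (g K).2 with ht'
    have hK : ∀ i < K.length, 0 < (-1 : ℤ) ^ (K.length - 1 - i) * K.getD i 0 := by
      intro i hi
      have h5 := h (i + 1) (by simp; omega)
      have e : (x :: K).length - 1 - (i + 1) = K.length - 1 - i := by
        simp; omega
      rwa [e, List.getD_cons_succ] at h5
    obtain ⟨h1, h2⟩ := ih hK
    have hx : 0 < (-1 : ℤ) ^ K.length * x := by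
      have h5 := h 0 (by simp)
      simpa using h5
    set e := (-1 : ℤ) ^ K.length with he
    have he2 : e * e = 1 := by
      rw [he, ← pow_add, ← two_mul, pow_mul]
      norm_num
    have h3 : (e * x) * (e * (t * t')) < 0 := mul_neg_of_pos_of_neg hx h2
    have hxtt : x * (t * t') < 0 := by
      have h4 : (e * x) * (e * (t * t')) = (e * e) * (x * (t * t')) := by ring
      rw [h4, he2, one_mul] at h3
      exact h3
    have ht0 : t ≠ 0 := by
      intro h0
      rw [h0] at h2
      simp at h2
    constructor
    · show |(x :: K).prod| ≤ |(g (x :: K)).1|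
      have hg : (g (x :: K)).1 = x * t - t' := rfl
      rw [hg, List.prod_cons, abs_mul]
      have hmag : |x * t| ≤ |x * t - t'| := by
        rcases abs_cases (x * t - t') with ⟨h5, _⟩ | ⟨h5, _⟩ <;>
          rcases abs_cases (x * t) with ⟨h6, _⟩ | ⟨h6, _⟩ <;>
          rw [h5, h6] <;> nlinarith [hxtt]
      calc |x| * |K.prod| ≤ |x| * |t| :=
            mul_le_mul_of_nonneg_left h1 (abs_nonneg x)
        _ = |x * t| := (abs_mul x t).symm
        _ ≤ |x * t - t'| := hmag
    · show (-1 : ℤ) ^ (x :: K).length * ((g (x :: K)).1 * (g (x :: K)).2) < 0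
      have hg1 : (g (x :: K)).1 = x * t - t' := rfl
      have hg2 : (g (x :: K)).2 = t := rfl
      rw [hg1, hg2, List.length_cons, pow_succ]
      have ht2 : 0 < t * t := mul_self_pos.mpr ht0
      nlinarith [mul_pos hx ht2, h2]

end EichlerAux

/-- If `γ = [[a,b],[c,d]] ∈ SL(2,ℤ)` with `c > 0` has Eichler canonical
representation with `l_{ν+1} ≠ 0` and `l_0 = 0`, then
`|l_1 ⋯ l_{ν+1}| ≤ |d - c|`. -/
theorem eichler_product_estimate_zero (γ : Matrix.SpecialLinearGroup (Fin 2) ℤ)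
    (hc : 0 < γ.1 1 0) (L : List ℤ)
    (hlen : 2 ≤ L.length) (hγ : γ = eichlerWord L)
    (hsign : ∀ j : ℕ, 1 ≤ j → j ≤ L.length - 2 → 0 < (-1 : ℤ) ^ (j - 1) * L.getD j 0)
    (hlast : 0 ≤ (-1 : ℤ) ^ (L.length - 2) * L.getD (L.length - 1) 0)
    (hlast' : L.getD (L.length - 1) 0 ≠ 0)
    (h0 : L.getD 0 0 = 0) :
    |(L.drop 1).prod| ≤ |γ.1 1 1 - γ.1 1 0| := by
  open EichlerAux in
  rcases L with _ | ⟨l0, J⟩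
  · simp at hlen
  have hl0 : l0 = 0 := by simpa using h0
  subst hl0
  have hJlen : 1 ≤ J.length := by
    simp at hlen; omega
  -- index-wise sign condition on J
  have hJ : ∀ i < J.length, 0 < (-1 : ℤ) ^ i * J.getD i 0 := by
    intro i hi
    by_cases hlt : i < J.length - 1
    · have h5 := hsign (i + 1) (by omega) (by simp; omega)
      simpa using h5
    · have hieq : i = J.length - 1 := by omega
      subst hieq
      have hL1 : ((0 : ℤ) :: J).length - 1 = J.length := by simp
      have hL2 : ((0 : ℤ) :: J).length - 2 = J.length - 1 := by simp
      rw [hL1, hL2] at hlast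
      rw [hL1] at hlast'
      have hg : ((0 : ℤ) :: J).getD J.length 0 = J.getD (J.length - 1) 0 := by
        obtain ⟨m, hm⟩ : ∃ m, J.length = m + 1 := ⟨J.length - 1, by omega⟩
        rw [hm]; simp
      rw [hg] at hlast hlast'
      have hne : (-1 : ℤ) ^ (J.length - 1) * J.getD (J.length - 1) 0 ≠ 0 :=
        mul_ne_zero (pow_ne_zero _ (by norm_num)) hlast'
      exact lt_of_le_of_ne hlast (Ne.symm hne)
  -- sign condition on the reversed list
  have hK : ∀ i < J.reverse.length,
      0 < (-1 : ℤ) ^ (J.reverse.length - 1 - i) * (J.reverse).getD i 0 := by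
    intro i hi
    rw [List.length_reverse] at hi ⊢
    have h1 : (J.reverse).getD i 0 = J.getD (J.length - 1 - i) 0 := by
      rw [List.getD_eq_getElem _ _ (by simpa using hi),
        List.getD_eq_getElem _ _ (by omega), List.getElem_reverse]
    rw [h1]
    exact hJ (J.length - 1 - i) (by omega)
  -- matrix computation
  have hw0 : wprod [(0 : ℤ)] = ModularGroup.S := by
    simp [wprod]
  have hγc : γ = wprod J.reverse * ModularGroup.S := by
    rw [hγ, eichlerWord_eq]
    rw [show ((0 : ℤ) :: J).reverse = J.reverse ++ [0] from by simp, wprod_append, hw0]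
  have hco : γ.1 = (wprod J.reverse).1 * !![0, -1; 1, 0] := by
    rw [hγc, Matrix.SpecialLinearGroup.coe_mul, ModularGroup.coe_S]
  have e10 : γ.1 1 0 = (wprod J.reverse).1 1 1 := by
    rw [hco]; simp [Matrix.mul_apply, Fin.sum_univ_two]
  have e11 : γ.1 1 1 = -(wprod J.reverse).1 1 0 := by
    rw [hco]; simp [Matrix.mul_apply, Fin.sum_univ_two]
  obtain ⟨hrow, -⟩ := wprod_row J.reverse
  obtain ⟨hkey, -⟩ := key J.reverse hK
  have hdc : γ.1 1 1 - γ.1 1 0 = -((g J.reverse).1) := by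
    rw [e10, e11, ← hrow]; ring
  have hdrop : (((0 : ℤ) :: J).drop 1) = J := rfl
  rw [hdc, abs_neg, hdrop, ← List.prod_reverse J]
  exact hkey
end

section
/- Define P_0 = S T^{l_0} with l_0 < 0 and P_{j+1} = (S T^{l_{j+1}}) P_j where the l_j (j ≥ 1) satisfy (-1)^{j-1} l_j > 0. Writing P_j = [[a_j,b_j],[c_j,d_j]], for all j ≥ 0 one has |l_0 l_1 ⋯ l_j| ≤ |d_j| and (-1)^j b_j d_j ≥ 0. -/
open ModularGroup

lemma eichler_aux_abs (x y : ℤ) (h : 0 ≤ x * y) : |y| ≤ |x + y| := by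
  nlinarith [sq_abs y, sq_abs (x + y), abs_nonneg (x + y), abs_nonneg y, sq_nonneg x]

/-- Key induction: with `P_0 = S T^{l_0}`, `l_0 < 0`, and
`P_{j+1} = (S T^{l_{j+1}}) P_j` where `(-1)^{j-1} l_j > 0` for `j ≥ 1`, writing
`P_j = [[a_j,b_j],[c_j,d_j]]` one has `|l_0 l_1 ⋯ l_j| ≤ |d_j|` and
`(-1)^j b_j d_j ≥ 0` for all `j ≥ 0`. -/
theorem eichler_partial_product_induction_neg (l : ℕ → ℤ)
    (h0 : l 0 < 0) (hsign : ∀ j : ℕ, 1 ≤ j → 0 < (-1 : ℤ) ^ (j - 1) * l j)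
    (P : ℕ → Matrix.SpecialLinearGroup (Fin 2) ℤ)
    (hP0 : P 0 = ModularGroup.S * ModularGroup.T ^ (l 0))
    (hPstep : ∀ j : ℕ, P (j + 1) = (ModularGroup.S * ModularGroup.T ^ (l (j + 1))) * P j) :
    ∀ j : ℕ,
      |∏ t ∈ Finset.range (j + 1), l t| ≤ |(P j).1 1 1| ∧
      0 ≤ (-1 : ℤ) ^ j * ((P j).1 0 1) * ((P j).1 1 1) := by
  have hd0 : (P 0).1 1 1 = l 0 := by
    rw [hP0]
    simp [Matrix.SpecialLinearGroup.coe_mul, ModularGroup.coe_S, ModularGroup.coe_T_zpow,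
      Matrix.mul_apply, Fin.sum_univ_two]
  have hb0 : (P 0).1 0 1 = -1 := by
    rw [hP0]
    simp [Matrix.SpecialLinearGroup.coe_mul, ModularGroup.coe_S, ModularGroup.coe_T_zpow,
      Matrix.mul_apply, Fin.sum_univ_two]
  have hdstep : ∀ j : ℕ, (P (j + 1)).1 1 1 = (P j).1 0 1 + l (j + 1) * (P j).1 1 1 := by
    intro j
    rw [hPstep]
    simp [Matrix.SpecialLinearGroup.coe_mul, ModularGroup.coe_S, ModularGroup.coe_T_zpow,
      Matrix.mul_apply, Fin.sum_univ_two]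
  have hbstep : ∀ j : ℕ, (P (j + 1)).1 0 1 = -((P j).1 1 1) := by
    intro j
    rw [hPstep]
    simp [Matrix.SpecialLinearGroup.coe_mul, ModularGroup.coe_S, ModularGroup.coe_T_zpow,
      Matrix.mul_apply, Fin.sum_univ_two]
  intro j
  induction j with
  | zero =>
    constructor
    · simp [hd0]
    · simp [hb0, hd0]
      linarith
  | succ j ih =>
    obtain ⟨ih1, ih2⟩ := ih
    set b := (P j).1 0 1 with hb
    set d := (P j).1 1 1 with hd
    have hl : 0 < (-1 : ℤ) ^ j * l (j + 1) := by
      have := hsign (j + 1) (by omega)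
      simpa using this
    -- b and l(j+1)*d have the same sign
    have hsame : 0 ≤ b * (l (j + 1) * d) := by
      rcases Nat.even_or_odd j with hj | hj
      · simp [hj.neg_one_pow] at ih2 hl
        nlinarith
      · simp [hj.neg_one_pow] at ih2 hl
        nlinarith
    constructor
    · rw [Finset.prod_range_succ, hdstep j, ← hb, ← hd]
      rw [abs_mul]
      have h1 : |l (j + 1) * d| ≤ |b + l (j + 1) * d| := eichler_aux_abs b _ (by linarith [hsame])
      rw [abs_mul] at h1
      have h2 : |∏ t ∈ Finset.range (j + 1), l t| * |l (j + 1)| ≤ |d| * |l (j + 1)| := by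
        apply mul_le_mul_of_nonneg_right ih1 (abs_nonneg _)
      calc |∏ t ∈ Finset.range (j + 1), l t| * |l (j + 1)|
          ≤ |d| * |l (j + 1)| := h2
        _ = |l (j + 1)| * |d| := by ring
        _ ≤ |b + l (j + 1) * d| := h1
    · rw [hdstep j, hbstep j, ← hb, ← hd]
      have hpow : (-1 : ℤ) ^ (j + 1) = -((-1 : ℤ) ^ j) := by ring
      rw [hpow]
      rcases Nat.even_or_odd j with hj | hj
      · simp [hj.neg_one_pow] at ih2 hl ⊢
        nlinarith [sq_nonneg d]
      · simp [hj.neg_one_pow] at ih2 hl ⊢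
        nlinarith [sq_nonneg d]
end

section
/- Define P_0 = S T^{l_0} with l_0 > 0, l_1 > 0, and P_{j+1} = (S T^{l_{j+1}}) P_j where (-1)^{j-1} l_j > 0 for j ≥ 1. Writing P_j = [[a_j,b_j],[c_j,d_j]], for all j ≥ 0 one has |l_0 l_1 ⋯ l_j| ≤ |c_j| + |d_j|, and for j ≥ 1 both (-1)^j b_j d_j ≥ 0 and (-1)^j a_j c_j ≥ 0. -/
open ModularGroup

private lemma eichler_step_arith (s E A B C D Q L : ℤ) (hs : s * s = 1)
    (hc : 1 ≤ E * C) (hd : 0 ≤ E * D) (ha : 1 ≤ s * E * A) (hb : 0 ≤ s * E * B)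
    (hp1 : 1 ≤ E * Q) (hp2 : E * Q ≤ E * C + E * D) (hl : 1 ≤ s * L) :
    1 ≤ s * E * (A + L * C) ∧ 0 ≤ s * E * (B + L * D) ∧
    1 ≤ (-s) * (s * E) * (-C) ∧ 0 ≤ (-s) * (s * E) * (-D) ∧
    1 ≤ s * E * (Q * L) ∧ s * E * (Q * L) ≤ s * E * (A + L * C) + s * E * (B + L * D) := by
  have k1 : (1:ℤ) * 1 ≤ (s * L) * (E * C) := mul_le_mul hl hc (by linarith) (by linarith)
  have k2 : 0 ≤ (s * L) * (E * D) := mul_nonneg (by linarith) hd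
  have k3 : (1:ℤ) * 1 ≤ (E * Q) * (s * L) := mul_le_mul hp1 hl (by linarith) (by linarith)
  have k4 : (E * Q) * (s * L) ≤ (E * C + E * D) * (s * L) :=
    mul_le_mul_of_nonneg_right hp2 (by linarith)
  refine ⟨by nlinarith, by nlinarith, ?_, ?_, by nlinarith, by nlinarith⟩
  · have h3 : (-s) * (s * E) * (-C) = s * s * (E * C) := by ring
    rw [h3, hs, one_mul]; exact hc
  · have h4 : (-s) * (s * E) * (-D) = s * s * (E * D) := by ring
    rw [h4, hs, one_mul]; exact hd

/-- Key induction: with `P_0 = S T^{l_0}`, `l_0 > 0`, `l_1 > 0`, and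
`P_{j+1} = (S T^{l_{j+1}}) P_j` where `(-1)^{j-1} l_j > 0` for `j ≥ 1`, writing
`P_j = [[a_j,b_j],[c_j,d_j]]` one has `|l_0 l_1 ⋯ l_j| ≤ |c_j| + |d_j|` for all
`j ≥ 0`, and `(-1)^j b_j d_j ≥ 0` and `(-1)^j a_j c_j ≥ 0` for `j ≥ 1`. -/
theorem eichler_partial_product_induction_pos (l : ℕ → ℤ)
    (h0 : 0 < l 0) (h1 : 0 < l 1)
    (hsign : ∀ j : ℕ, 1 ≤ j → 0 < (-1 : ℤ) ^ (j - 1) * l j)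
    (P : ℕ → Matrix.SpecialLinearGroup (Fin 2) ℤ)
    (hP0 : P 0 = ModularGroup.S * ModularGroup.T ^ (l 0))
    (hPstep : ∀ j : ℕ, P (j + 1) = (ModularGroup.S * ModularGroup.T ^ (l (j + 1))) * P j) :
    (∀ j : ℕ, |∏ t ∈ Finset.range (j + 1), l t| ≤ |(P j).1 1 0| + |(P j).1 1 1|) ∧
    (∀ j : ℕ, 1 ≤ j →
      0 ≤ (-1 : ℤ) ^ j * ((P j).1 0 1) * ((P j).1 1 1) ∧
      0 ≤ (-1 : ℤ) ^ j * ((P j).1 0 0) * ((P j).1 1 0)) := by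
  set a : ℕ → ℤ := fun j => (P j).1 0 0 with ha
  set b : ℕ → ℤ := fun j => (P j).1 0 1 with hb
  set c : ℕ → ℤ := fun j => (P j).1 1 0 with hc
  set d : ℕ → ℤ := fun j => (P j).1 1 1 with hd
  set Pi : ℕ → ℤ := fun j => ∏ t ∈ Finset.range (j + 1), l t with hPi
  have hA0 : a 0 = 0 := by
    show (P 0).1 0 0 = 0
    rw [hP0]
    simp [Matrix.SpecialLinearGroup.coe_mul, ModularGroup.coe_S, ModularGroup.coe_T_zpow,
      Matrix.mul_apply, Fin.sum_univ_succ]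
  have hB0 : b 0 = -1 := by
    show (P 0).1 0 1 = -1
    rw [hP0]
    simp [Matrix.SpecialLinearGroup.coe_mul, ModularGroup.coe_S, ModularGroup.coe_T_zpow,
      Matrix.mul_apply, Fin.sum_univ_succ]
  have hC0 : c 0 = 1 := by
    show (P 0).1 1 0 = 1
    rw [hP0]
    simp [Matrix.SpecialLinearGroup.coe_mul, ModularGroup.coe_S, ModularGroup.coe_T_zpow,
      Matrix.mul_apply, Fin.sum_univ_succ]
  have hD0 : d 0 = l 0 := by
    show (P 0).1 1 1 = l 0
    rw [hP0]
    simp [Matrix.SpecialLinearGroup.coe_mul, ModularGroup.coe_S, ModularGroup.coe_T_zpow,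
      Matrix.mul_apply, Fin.sum_univ_succ]
  have hE : ∀ j : ℕ, a (j+1) = -(c j) ∧ b (j+1) = -(d j) ∧
      c (j+1) = a j + l (j+1) * c j ∧ d (j+1) = b j + l (j+1) * d j := by
    intro j
    refine ⟨?_, ?_, ?_, ?_⟩ <;>
    · show (P (j+1)).1 _ _ = _
      rw [hPstep j]
      simp [Matrix.SpecialLinearGroup.coe_mul, ModularGroup.coe_S, ModularGroup.coe_T_zpow,
        Matrix.mul_apply, Fin.sum_univ_succ, ha, hb, hc, hd]
  -- sign sequence e 0 = 1, e (j+1) = (-1)^j * e j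
  set e : ℕ → ℤ := fun j => Nat.rec 1 (fun n acc => (-1 : ℤ) ^ n * acc) j with he
  have heRec : ∀ j : ℕ, e (j + 1) = (-1) ^ j * e j := fun j => rfl
  have hsSq : ∀ j : ℕ, ((-1:ℤ)^j) * ((-1:ℤ)^j) = 1 := by
    intro j; rw [← pow_add]; exact Even.neg_one_pow ⟨_, rfl⟩
  have heSq : ∀ j : ℕ, e j * e j = 1 := by
    intro j
    induction j with
    | zero => norm_num [he]
    | succ n ih =>
      rw [heRec n]
      have : ((-1:ℤ)^n * e n) * ((-1:ℤ)^n * e n) = (((-1:ℤ)^n) * ((-1:ℤ)^n)) * (e n * e n) := by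
        ring
      rw [this, hsSq n, ih, mul_one]
  have hePM : ∀ j : ℕ, e j = 1 ∨ e j = -1 := fun j => mul_self_eq_one_iff.mp (heSq j)
  -- key invariant
  have key : ∀ j : ℕ, 1 ≤ j →
      1 ≤ e j * c j ∧ 0 ≤ e j * d j ∧ 1 ≤ (-1:ℤ)^j * e j * a j ∧ 0 ≤ (-1:ℤ)^j * e j * b j ∧
        1 ≤ e j * Pi j ∧ e j * Pi j ≤ e j * c j + e j * d j := by
    intro j hj
    induction j, hj using Nat.le_induction with
    | base =>
      obtain ⟨hA, hB, hC, hD⟩ := hE 0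
      have he1 : e 1 = 1 := by norm_num [he]
      have hPi1 : Pi 1 = l 0 * l 1 := by
        show (∏ t ∈ Finset.range 2, l t) = l 0 * l 1
        rw [Finset.prod_range_succ, Finset.prod_range_one]
      rw [hA, hB, hC, hD, he1, hA0, hB0, hC0, hD0, hPi1]
      refine ⟨by nlinarith, by nlinarith, by norm_num, by nlinarith, by nlinarith, by nlinarith⟩
    | succ j hj ih =>
      obtain ⟨hc1, hd1, ha1, hb1, hp1, hp2⟩ := ih
      obtain ⟨hA, hB, hC, hD⟩ := hE j
      have hsl : 0 < (-1:ℤ)^j * l (j+1) := by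
        have := hsign (j+1) (by omega)
        simpa using this
      have hsl1 : 1 ≤ (-1:ℤ)^j * l (j+1) := hsl
      have hPiS : Pi (j+1) = Pi j * l (j+1) := by
        show (∏ t ∈ Finset.range (j+2), l t) = (∏ t ∈ Finset.range (j+1), l t) * l (j+1)
        rw [Finset.prod_range_succ]
      have hpow : ((-1:ℤ))^(j+1) = -((-1:ℤ)^j) := by rw [pow_succ]; ring
      rw [hA, hB, hC, hD, heRec j, hPiS, hpow]
      have main := eichler_step_arith ((-1:ℤ)^j) (e j) (a j) (b j) (c j) (d j) (Pi j)
        (l (j+1)) (hsSq j) hc1 hd1 ha1 hb1 hp1 hp2 hsl1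
      obtain ⟨m1, m2, m3, m4, m5, m6⟩ := main
      exact ⟨m1, m2, by linarith [m3], by linarith [m4], m5, m6⟩
  have habs : ∀ (j : ℕ) (x : ℤ), 0 ≤ e j * x → |x| = e j * x := by
    intro j x hx
    rcases hePM j with h | h
    · rw [h, one_mul] at hx ⊢; exact abs_of_nonneg hx
    · rw [h] at hx ⊢; rw [abs_of_nonpos (by linarith)]; ring
  constructor
  · intro j
    rcases Nat.eq_zero_or_pos j with rfl | hj
    · have hp0 : (∏ t ∈ Finset.range (0 + 1), l t) = l 0 := by simp
      show |∏ t ∈ Finset.range (0 + 1), l t| ≤ |c 0| + |d 0|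
      rw [hp0, hC0, hD0, abs_of_pos h0, abs_one]
      linarith [abs_nonneg (l 0), le_abs_self (l 0)]
    · obtain ⟨hc1, hd1, _, _, hp1, hp2⟩ := key j hj
      show |Pi j| ≤ |c j| + |d j|
      rw [habs j _ (by linarith), habs j _ (by linarith), habs j _ (by linarith)]
      exact hp2
  · intro j hj
    obtain ⟨hc1, hd1, ha1, hb1, _, _⟩ := key j hj
    have he2 := heSq j
    constructor
    · show 0 ≤ (-1:ℤ)^j * b j * d j
      have heq : (-1:ℤ)^j * b j * d j = ((-1:ℤ)^j * e j * b j) * (e j * d j) * (e j * e j) +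
          ((-1:ℤ)^j * b j * d j) * (1 - (e j * e j) * (e j * e j)) := by ring
      rw [heq, he2]
      norm_num
      exact mul_nonneg hb1 hd1
    · show 0 ≤ (-1:ℤ)^j * a j * c j
      have heq : (-1:ℤ)^j * a j * c j = ((-1:ℤ)^j * e j * a j) * (e j * c j) * (e j * e j) +
          ((-1:ℤ)^j * a j * c j) * (1 - (e j * e j) * (e j * e j)) := by ring
      rw [heq, he2]
      norm_num
      exact mul_nonneg (by linarith) (by linarith)
end

section
/- Let ρ : SL(2,ℤ) → GL(p,ℂ) be a representation and F = (f_1,…,f_p) a holomorphic function on the upper half-plane of weight k with respect to ρ, i.e. ρ(γ)F(τ) = (cτ+d)^{-k} F(γτ) for all γ = [[a,b],[c,d]] ∈ SL(2,ℤ). Suppose there exist constants K₁, σ > 0 with y^σ |f_l(z)| ≤ K₁ for all z in the closure of the fundamental domain and all l, and ‖ρ(γ)‖ ≤ K₃ (c² + d²)^{K₄} for all γ. Then with σ = (k + K₅)/2 for suitable K₅ depending only on k, K₄, each y^σ |f_l(τ)| is bounded on all of the upper half-plane by a constant depending only on p, K₁, K₃, K₄, k. -/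
open Matrix

set_option maxHeartbeats 2000000 in
/-- Hecke bound: if `F` is holomorphic on `ℍ` of weight `k` for a representation
`ρ` of `SL(2,ℤ)`, `y^σ |f_l|` is bounded by `K₁` on the closure of the standard
fundamental domain for `σ = (k+K₅)/2`, and `‖ρ(γ)‖ ≤ K₃ (c²+d²)^{K₄}`, then for
a suitable `K₅` depending only on `k, K₄`, each `y^{(k+K₅)/2} |f_l(τ)|` is
bounded on all of `ℍ` by a constant depending only on `p, K₁, K₃, K₄, k`. -/
theorem vvmf_growth_bound (p : ℕ) (k : ℤ) (K₁ K₃ K₄ : ℝ)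
    (hK₁ : 0 < K₁) (hK₃ : 0 < K₃) :
    ∃ K₅ B : ℝ, 0 < B ∧
      ∀ (ρ : Matrix.SpecialLinearGroup (Fin 2) ℤ →* Matrix.GeneralLinearGroup (Fin p) ℂ)
        (F : ℂ → Fin p → ℂ),
        (∀ l : Fin p, DifferentiableOn ℂ (fun τ => F τ l) {τ : ℂ | 0 < τ.im}) →
        (∀ γ : Matrix.SpecialLinearGroup (Fin 2) ℤ, ∀ τ : ℂ, 0 < τ.im →
          ((ρ γ : Matrix (Fin p) (Fin p) ℂ)).mulVec (F τ) =
            fun l => ((γ.1 1 0 : ℂ) * τ + (γ.1 1 1 : ℂ)) ^ (-k) *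
              F (((γ.1 0 0 : ℂ) * τ + (γ.1 0 1 : ℂ)) /
                 ((γ.1 1 0 : ℂ) * τ + (γ.1 1 1 : ℂ))) l) →
        (∀ z : ℂ, |z.re| ≤ 1 / 2 → 1 ≤ ‖z‖ → 0 < z.im →
          ∀ l : Fin p,
            Real.rpow z.im (((k : ℝ) + K₅) / 2) * ‖F z l‖ ≤ K₁) →
        (∀ γ : Matrix.SpecialLinearGroup (Fin 2) ℤ, ∀ l m : Fin p,
          ‖(ρ γ : Matrix (Fin p) (Fin p) ℂ) l m‖ ≤
            K₃ * Real.rpow ((γ.1 1 0 : ℝ) ^ 2 + (γ.1 1 1 : ℝ) ^ 2) K₄) →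
        ∀ τ : ℂ, 0 < τ.im → ∀ l : Fin p,
          Real.rpow τ.im (((k : ℝ) + K₅) / 2) * ‖F τ l‖ ≤ B := by
  set M : ℝ := max K₄ 0 with hM
  have hM0 : 0 ≤ M := le_max_right _ _
  have hK₄M : K₄ ≤ M := le_max_left _ _
  refine ⟨2 * M, (2:ℝ) ^ M * K₃ * ((p + 1) * K₁), by positivity, ?_⟩
  intro ρ F _hdiff htrans hfd hρ τ hτ l
  set σ : ℝ := ((k : ℝ) + 2 * M) / 2 with hσ
  show τ.im ^ σ * ‖F τ l‖ ≤ (2:ℝ) ^ M * K₃ * ((p + 1) * K₁)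
  -- move τ into the fundamental domain
  set z0 : UpperHalfPlane := ⟨τ, hτ⟩ with hz0
  have hz0c : (z0 : ℂ) = τ := rfl
  obtain ⟨g, hg⟩ := ModularGroup.exists_smul_mem_fd z0
  set w : UpperHalfPlane := g • z0 with hwdef
  set γ : Matrix.SpecialLinearGroup (Fin 2) ℤ := g⁻¹ with hγ
  have hgw : γ • w = z0 := by rw [hwdef, hγ, inv_smul_smul]
  clear_value w z0 γ
  clear hwdef hz0 hγ
  -- notation
  set c : ℤ := γ.1 1 0 with hc
  set d : ℤ := γ.1 1 1 with hd
  set dd : ℂ := (c : ℂ) * (w : ℂ) + (d : ℂ) with hdd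
  have hdd0 : dd ≠ 0 := by
    have h := UpperHalfPlane.denom_ne_zero γ w
    rw [ModularGroup.denom_apply] at h
    exact h
  set D : ℝ := ‖dd‖ with hD
  have hD0 : 0 < D := norm_pos_iff.mpr hdd0
  set A : ℝ := w.im with hA
  have hA0 : 0 < A := w.im_pos
  -- τ = γ • w  as complex numbers
  have hcoe : (((γ • w : UpperHalfPlane)) : ℂ) = τ := by rw [hgw, hz0c]
  have hτeq : ((γ.1 0 0 : ℂ) * (w : ℂ) + (γ.1 0 1 : ℂ)) / dd = τ := by
    rw [← hcoe, UpperHalfPlane.specialLinearGroup_apply]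
    norm_num
    rfl
  -- im τ = A / D ^ 2
  have hτim : τ.im = A / D ^ 2 := by
    have h1 : ((γ • w : UpperHalfPlane)).im = w.im / Complex.normSq dd := by
      rw [ModularGroup.im_smul_eq_div_normSq, ModularGroup.denom_apply]
    have h2 : ((γ • w : UpperHalfPlane)).im = τ.im := by
      rw [hgw]; exact congrArg Complex.im hz0c
    rw [← h2, h1, hD, Complex.sq_norm]
  -- the transformation law at w
  have hF : F τ l = dd ^ k * ((ρ γ : Matrix (Fin p) (Fin p) ℂ)).mulVec (F (w : ℂ)) l := by
    have h := congrFun (htrans γ (w : ℂ) w.im_pos) l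
    rw [← hdd, hτeq] at h
    rw [h, ← mul_assoc, ← zpow_add₀ hdd0]
    simp
  -- bound on the sum
  set S : ℝ := ∑ m : Fin p, ‖F (w : ℂ) m‖ with hS
  set C2 : ℝ := (c : ℝ) ^ 2 + (d : ℝ) ^ 2 with hC2
  have hC2one : (1 : ℝ) ≤ C2 := by
    have hcd : c ≠ 0 ∨ d ≠ 0 := by
      by_contra h
      push_neg at h
      have hdet := γ.2
      rw [Matrix.det_fin_two] at hdet
      rw [← hc, ← hd, h.1, h.2] at hdet
      simp at hdet
    have h1 : (1 : ℤ) ≤ c ^ 2 + d ^ 2 := by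
      rcases hcd with h | h
      · nlinarith [sq_nonneg d, Int.one_le_abs h, sq_abs c, abs_nonneg c]
      · nlinarith [sq_nonneg c, Int.one_le_abs h, sq_abs d, abs_nonneg d]
    rw [hC2]
    exact_mod_cast h1
  have hSb : ‖((ρ γ : Matrix (Fin p) (Fin p) ℂ)).mulVec (F (w : ℂ)) l‖ ≤
      K₃ * C2 ^ K₄ * S := by
    simp only [Matrix.mulVec, dotProduct]
    calc ‖∑ m : Fin p, (ρ γ : Matrix (Fin p) (Fin p) ℂ) l m * F (w : ℂ) m‖
        ≤ ∑ m : Fin p, ‖(ρ γ : Matrix (Fin p) (Fin p) ℂ) l m * F (w : ℂ) m‖ :=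
          norm_sum_le _ _
      _ ≤ ∑ m : Fin p, K₃ * C2 ^ K₄ * ‖F (w : ℂ) m‖ := by
          refine Finset.sum_le_sum fun m _ => ?_
          rw [norm_mul]
          exact mul_le_mul_of_nonneg_right (hρ γ l m) (norm_nonneg _)
      _ = K₃ * C2 ^ K₄ * S := by rw [hS, Finset.mul_sum]
  -- fundamental domain bound
  have hwfd : ∀ m : Fin p, A ^ σ * ‖F (w : ℂ) m‖ ≤ K₁ := by
    intro m
    have h1 : 1 ≤ ‖(w : ℂ)‖ := by
      have h := hg.1
      have habs : (1:ℝ) ≤ ‖(w : ℂ)‖ ^ 2 := by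
        rw [Complex.sq_norm]; exact h
      nlinarith [norm_nonneg (w : ℂ)]
    exact hfd (w : ℂ) hg.2 h1 w.im_pos m
  have hST : A ^ σ * S ≤ p * K₁ := by
    rw [hS, Finset.mul_sum]
    calc (∑ m : Fin p, A ^ σ * ‖F (w : ℂ) m‖)
        ≤ ∑ _m : Fin p, K₁ := Finset.sum_le_sum fun m _ => hwfd m
      _ = p * K₁ := by simp [mul_comm]
  -- the key exponent computation
  set E : ℝ := D ^ (k : ℝ) / (D ^ 2) ^ σ with hE
  have hE0 : 0 < E :=
    div_pos (Real.rpow_pos_of_pos hD0 _) (Real.rpow_pos_of_pos (by positivity) _)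
  have hDC : C2 ≤ 2 * D ^ 2 := by
    have hnormsq : D ^ 2 = ((c : ℝ) * w.re + (d : ℝ)) ^ 2 + ((c : ℝ) * w.im) ^ 2 := by
      rw [hD, Complex.sq_norm, hdd, Complex.normSq_apply]
      simp only [Complex.add_re, Complex.add_im, Complex.mul_re, Complex.mul_im,
        Complex.intCast_re, Complex.intCast_im, UpperHalfPlane.coe_re, UpperHalfPlane.coe_im]
      ring
    have h1 : (1:ℝ) ≤ w.re ^ 2 + w.im ^ 2 := by
      have h := hg.1
      rw [Complex.normSq_apply] at h
      simpa [UpperHalfPlane.coe_re, UpperHalfPlane.coe_im, sq] using h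
    have h2 : |w.re| ≤ 1 / 2 := hg.2
    have h2' : w.re ^ 2 ≤ (1/2) ^ 2 := by
      rw [← sq_abs]
      exact pow_le_pow_left₀ (abs_nonneg _) h2 2
    rw [hnormsq, hC2]
    nlinarith [sq_nonneg (2*(c:ℝ)*w.re + (d:ℝ)),
      mul_le_mul_of_nonneg_left h2' (sq_nonneg (c:ℝ)),
      mul_le_mul_of_nonneg_left h1 (sq_nonneg (c:ℝ))]
  have hkey : E * C2 ^ K₄ ≤ (2:ℝ) ^ M := by
    have hD2 : (D ^ 2 : ℝ) ^ σ = D ^ (2 * σ) := by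
      rw [← Real.rpow_natCast D 2, ← Real.rpow_mul hD0.le]
      norm_num
    have hEeq : E = (D ^ 2 : ℝ) ^ (-M) := by
      rw [hE, hD2, ← Real.rpow_sub hD0]
      have he : (k : ℝ) - 2 * σ = -(2 * M) := by rw [hσ]; ring
      rw [he, ← Real.rpow_natCast D 2, ← Real.rpow_mul hD0.le]
      norm_num
    have hC2M : (C2:ℝ) ^ K₄ ≤ C2 ^ M :=
      Real.rpow_le_rpow_of_exponent_le hC2one hK₄M
    have hD2pos : (0:ℝ) < D ^ 2 := by positivity
    calc E * C2 ^ K₄ ≤ E * C2 ^ M :=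
          mul_le_mul_of_nonneg_left hC2M hE0.le
      _ = (C2 / D ^ 2) ^ M := by
          rw [hEeq, Real.div_rpow (by positivity) hD2pos.le, Real.rpow_neg hD2pos.le]
          ring
      _ ≤ (2:ℝ) ^ M := by
          apply Real.rpow_le_rpow (by positivity) _ hM0
          rw [div_le_iff₀ hD2pos]
          linarith
  -- put everything together
  have hLHS : τ.im ^ σ * ‖F τ l‖ =
      E * (A ^ σ *
        ‖((ρ γ : Matrix (Fin p) (Fin p) ℂ)).mulVec (F (w : ℂ)) l‖) := by
    rw [hτim, hF, norm_mul, norm_zpow, ← hD,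
      Real.div_rpow hA0.le (by positivity), ← Real.rpow_intCast D k, hE]
    ring
  rw [hLHS]
  calc E * (A ^ σ *
        ‖((ρ γ : Matrix (Fin p) (Fin p) ℂ)).mulVec (F (w : ℂ)) l‖)
      ≤ E * (A ^ σ * (K₃ * C2 ^ K₄ * S)) := by
        apply mul_le_mul_of_nonneg_left _ hE0.le
        exact mul_le_mul_of_nonneg_left hSb (Real.rpow_nonneg hA0.le _)
    _ = (E * C2 ^ K₄) * K₃ * (A ^ σ * S) := by ring
    _ ≤ (2:ℝ) ^ M * K₃ * (p * K₁) := by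
        have hS0 : (0:ℝ) ≤ S := Finset.sum_nonneg fun m _ => norm_nonneg _
        have h1 : E * C2 ^ K₄ * K₃ ≤ (2:ℝ) ^ M * K₃ :=
          mul_le_mul_of_nonneg_right hkey hK₃.le
        have h2 : (0:ℝ) ≤ A ^ σ * S := mul_nonneg (Real.rpow_nonneg hA0.le σ) hS0
        have h3 : (0:ℝ) ≤ (2:ℝ) ^ M * K₃ :=
          mul_nonneg (Real.rpow_nonneg (by norm_num) M) hK₃.le
        exact mul_le_mul h1 hST h2 h3
    _ ≤ (2:ℝ) ^ M * K₃ * ((p + 1) * K₁) := by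
        have h3 : (0:ℝ) ≤ (2:ℝ) ^ M * K₃ :=
          mul_nonneg (Real.rpow_nonneg (by norm_num) M) hK₃.le
        refine mul_le_mul_of_nonneg_left ?_ h3
        refine mul_le_mul_of_nonneg_right ?_ hK₁.le
        linarith [Nat.cast_nonneg (α := ℝ) p]
end
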